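/- Let G ⊆ ℝᵐ be open, and suppose: (a) for each j the jump map L_j : G → ℝᵐ is continuous and u ∈ G implies u + L_j(u) ∈ G; (b) for any (τ, z₀) ∈ ℝ × G the ODE z' = F(t,z) has a unique solution with maximal interval of existence (τ - a, τ + a) where a > δ for a fixed δ > 0 independent of (τ, z₀); (c) the impulse times satisfy 0 < t_j - t_{j-1} < δ for all j and |t_j| → ∞ as |j| → ∞. Then for any τ ∈ ℝ and u₀ ∈ G, the impulsive equation u' = F(t,u) for t ≠ t_j, Δu(t_j) = L_j(u(t_j)), with u(τ⁺) = u₀, has a solution defined on all of [τ, ∞). -/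

import Mathlib

open Set Filter

/-- Partition times: `impS τ tj j₀ 0 = τ`, `impS τ tj j₀ (k+1) = tj (j₀ + k)`. -/
noncomputable def impS (τ : ℝ) (tj : ℤ → ℝ) (j₀ : ℤ) : ℕ → ℝ
  | 0 => τ
  | k+1 => tj (j₀ + k)

/-- Chosen local solution of the ODE starting at `(σ, z₀)`. -/
noncomputable def impZ {m : ℕ} {G : Set (Fin m → ℝ)} {F : ℝ → (Fin m → ℝ) → (Fin m → ℝ)} {δ : ℝ}
    (hloc : ∀ (σ : ℝ), ∀ z₀ ∈ G, ∃ z : ℝ → (Fin m → ℝ), z σ = z₀ ∧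
        ∀ t ∈ Set.Ioo (σ - δ) (σ + δ), z t ∈ G ∧ HasDerivAt z (F t (z t)) t)
    (σ : ℝ) (z₀ : Fin m → ℝ) : ℝ → (Fin m → ℝ) :=
  open Classical in
  if h : z₀ ∈ G then Classical.choose (hloc σ z₀ h) else fun _ => z₀

lemma impZ_spec {m : ℕ} {G : Set (Fin m → ℝ)} {F : ℝ → (Fin m → ℝ) → (Fin m → ℝ)} {δ : ℝ}
    (hloc : ∀ (σ : ℝ), ∀ z₀ ∈ G, ∃ z : ℝ → (Fin m → ℝ), z σ = z₀ ∧
        ∀ t ∈ Set.Ioo (σ - δ) (σ + δ), z t ∈ G ∧ HasDerivAt z (F t (z t)) t)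
    (σ : ℝ) {z₀ : Fin m → ℝ} (h : z₀ ∈ G) :
    impZ hloc σ z₀ σ = z₀ ∧ ∀ t ∈ Set.Ioo (σ - δ) (σ + δ),
      impZ hloc σ z₀ t ∈ G ∧ HasDerivAt (impZ hloc σ z₀) (F t (impZ hloc σ z₀ t)) t := by
  classical
  simp only [impZ, dif_pos h]
  exact Classical.choose_spec (hloc σ z₀ h)

/-- Values right after each impulse. -/
noncomputable def impW {m : ℕ} {G : Set (Fin m → ℝ)} {F : ℝ → (Fin m → ℝ) → (Fin m → ℝ)} {δ : ℝ}
    (hloc : ∀ (σ : ℝ), ∀ z₀ ∈ G, ∃ z : ℝ → (Fin m → ℝ), z σ = z₀ ∧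
        ∀ t ∈ Set.Ioo (σ - δ) (σ + δ), z t ∈ G ∧ HasDerivAt z (F t (z t)) t)
    (L : ℤ → (Fin m → ℝ) → (Fin m → ℝ)) (j₀ : ℤ) (s : ℕ → ℝ) (u₀ : Fin m → ℝ) :
    ℕ → (Fin m → ℝ)
  | 0 => u₀
  | k+1 => impZ hloc (s k) (impW hloc L j₀ s u₀ k) (s (k+1)) +
      L (j₀ + k) (impZ hloc (s k) (impW hloc L j₀ s u₀ k) (s (k+1)))

/-- Global forward existence for impulsive equations. -/
theorem stmt_8 (m : ℕ) (G : Set (Fin m → ℝ)) (hG : IsOpen G)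
    (F : ℝ → (Fin m → ℝ) → (Fin m → ℝ))
    (hFcont : Continuous fun p : ℝ × (Fin m → ℝ) => F p.1 p.2)
    (tj : ℤ → ℝ) (L : ℤ → (Fin m → ℝ) → (Fin m → ℝ))
    (hLcont : ∀ j : ℤ, ContinuousOn (L j) G)
    (hLG : ∀ j : ℤ, ∀ u ∈ G, u + L j u ∈ G)
    (δ : ℝ) (hδ : 0 < δ)
    (hgap : ∀ j : ℤ, 0 < tj j - tj (j - 1) ∧ tj j - tj (j - 1) < δ)
    (htop : Tendsto tj atTop atTop) (hbot : Tendsto tj atBot atBot)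
    (hloc : ∀ (σ : ℝ), ∀ z₀ ∈ G, ∃ z : ℝ → (Fin m → ℝ), z σ = z₀ ∧
        ∀ t ∈ Set.Ioo (σ - δ) (σ + δ), z t ∈ G ∧ HasDerivAt z (F t (z t)) t)
    (huniq : ∀ (σ : ℝ) (a b : ℝ) (z₁ z₂ : ℝ → (Fin m → ℝ)), σ ∈ Set.Ioo a b →
        z₁ σ = z₂ σ →
        (∀ t ∈ Set.Ioo a b, z₁ t ∈ G ∧ HasDerivAt z₁ (F t (z₁ t)) t) →
        (∀ t ∈ Set.Ioo a b, z₂ t ∈ G ∧ HasDerivAt z₂ (F t (z₂ t)) t) →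
        Set.EqOn z₁ z₂ (Set.Ioo a b)) :
    ∀ (τ : ℝ), ∀ u₀ ∈ G, ∃ u : ℝ → (Fin m → ℝ),
      Tendsto u (nhdsWithin τ (Set.Ioi τ)) (nhds u₀) ∧
      (∀ t : ℝ, τ < t → u t ∈ G) ∧
      (∀ t : ℝ, τ < t → (∀ j : ℤ, t ≠ tj j) → HasDerivAt u (F t (u t)) t) ∧
      (∀ j : ℤ, τ < tj j → ContinuousWithinAt u (Set.Iic (tj j)) (tj j)) ∧
      (∀ j : ℤ, τ < tj j →
        Tendsto u (nhdsWithin (tj j) (Set.Ioi (tj j))) (nhds (u (tj j) + L j (u (tj j))))) := by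
  intro τ u₀ hu₀
  classical
  -- tj is strictly monotone
  have hmono : StrictMono tj := by
    apply strictMono_int_of_lt_succ
    intro n
    have h := (hgap (n + 1)).1
    have : n + 1 - 1 = n := by ring
    rw [this] at h
    linarith
  -- least index j₀ with τ < tj j₀
  obtain ⟨J, hJ⟩ : ∃ J : ℤ, τ < tj J := (htop.eventually (eventually_gt_atTop τ)).exists
  obtain ⟨B, hB⟩ : ∃ B : ℤ, ∀ j ≤ B, tj j ≤ τ := by
    have h := hbot.eventually (eventually_le_atBot τ)
    exact mem_atBot_sets.mp h
  obtain ⟨j₀, hj₀, hj₀min⟩ : ∃ j₀ : ℤ, τ < tj j₀ ∧ ∀ j : ℤ, τ < tj j → j₀ ≤ j := by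
    obtain ⟨lb, h1, h2⟩ := Int.exists_least_of_bdd (P := fun j => τ < tj j)
      ⟨B + 1, fun j hj => by
        by_contra hc
        push_neg at hc
        exact absurd (hB j (by omega)) (not_le.mpr hj)⟩ ⟨J, hJ⟩
    exact ⟨lb, h1, h2⟩
  have hprev : tj (j₀ - 1) ≤ τ := by
    by_contra h
    push_neg at h
    have := hj₀min _ h
    omega
  set s : ℕ → ℝ := impS τ tj j₀ with hs_def
  have hs0 : s 0 = τ := rfl
  have hssucc : ∀ k : ℕ, s (k + 1) = tj (j₀ + k) := fun k => rfl
  -- s is strictly increasing with steps < δ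
  have hstep : ∀ k : ℕ, s k < s (k + 1) ∧ s (k + 1) < s k + δ := by
    intro k
    cases k with
    | zero =>
      have h01 : s 1 = tj j₀ := by rw [hssucc]; norm_num
      rw [hs0, h01]
      exact ⟨hj₀, by linarith [(hgap j₀).2, hprev]⟩
    | succ k =>
      have h := hgap (j₀ + (k + 1))
      have he : j₀ + ((k : ℤ) + 1) - 1 = j₀ + k := by ring
      rw [he] at h
      constructor
      · simp only [hssucc]
        push_cast
        linarith [h.1]
      · simp only [hssucc]
        push_cast
        linarith [h.2]
  have hsmono : StrictMono s := strictMono_nat_of_lt_succ fun k => (hstep k).1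
  set w : ℕ → (Fin m → ℝ) := impW hloc L j₀ s u₀ with hw_def
  set z : ℕ → ℝ → (Fin m → ℝ) := fun k => impZ hloc (s k) (w k) with hz_def
  have hw0 : w 0 = u₀ := rfl
  have hwsucc : ∀ k : ℕ, w (k + 1) = z k (s (k + 1)) + L (j₀ + k) (z k (s (k + 1))) :=
    fun k => rfl
  have hsIoo : ∀ k : ℕ, s (k + 1) ∈ Set.Ioo (s k - δ) (s k + δ) :=
    fun k => ⟨by linarith [(hstep k).1, hδ], (hstep k).2⟩
  -- w k ∈ G for all k
  have hwG : ∀ k : ℕ, w k ∈ G := by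
    intro k
    induction k with
    | zero => exact hu₀
    | succ k ih =>
      have hsp := impZ_spec hloc (s k) ih
      have hG1 : z k (s (k + 1)) ∈ G := (hsp.2 _ (hsIoo k)).1
      rw [hwsucc]
      exact hLG (j₀ + k) _ hG1
  have hzspec : ∀ k : ℕ, z k (s k) = w k ∧ ∀ t ∈ Set.Ioo (s k - δ) (s k + δ),
      z k t ∈ G ∧ HasDerivAt (z k) (F t (z k t)) t :=
    fun k => impZ_spec hloc (s k) (hwG k)
  -- existence of a piece index for each t
  have hstend : Tendsto (fun k : ℕ => s (k + 1)) atTop atTop := by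
    have h1 : Tendsto (fun k : ℕ => j₀ + (k : ℤ)) atTop atTop :=
      tendsto_atTop_add_const_left _ j₀ tendsto_natCast_atTop_atTop
    have := htop.comp h1
    simpa [Function.comp_def, hssucc] using this
  have hfind : ∀ t : ℝ, ∃ k : ℕ, t ≤ s (k + 1) :=
    fun t => (hstend.eventually (eventually_ge_atTop t)).exists
  set K : ℝ → ℕ := fun t => Nat.find (hfind t) with hK_def
  set u : ℝ → (Fin m → ℝ) := fun t => z (K t) t with hu_def
  -- piece lemma
  have hupiece : ∀ (k : ℕ) (t : ℝ), s k < t → t ≤ s (k + 1) → u t = z k t := by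
    intro k t h1 h2
    have hKk : K t = k := by
      rw [hK_def]
      rw [Nat.find_eq_iff]
      refine ⟨h2, ?_⟩
      intro k' hk'
      have hle : s (k' + 1) ≤ s k := hsmono.monotone (by omega)
      push_neg
      linarith
    simp only [hu_def, hKk]
  -- each t > τ lies in some piece
  have hpieceex : ∀ t : ℝ, τ < t → ∃ k : ℕ, s k < t ∧ t ≤ s (k + 1) := by
    intro t ht
    refine ⟨K t, ?_, Nat.find_spec (hfind t)⟩
    rcases Nat.eq_zero_or_pos (K t) with h | h
    · rw [h, hs0]; exact ht
    · obtain ⟨k', hk'⟩ : ∃ k', K t = k' + 1 := ⟨K t - 1, by omega⟩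
      have hmin := Nat.find_min (hfind t) (show k' < K t by omega)
      push_neg at hmin
      rw [hk']
      exact hmin
  -- derivative/membership of z k on the half-open interval
  have hzmem : ∀ (k : ℕ) (t : ℝ), s k < t → t ≤ s (k + 1) →
      z k t ∈ G ∧ HasDerivAt (z k) (F t (z k t)) t := by
    intro k t h1 h2
    refine (hzspec k).2 t ⟨by linarith [hδ], ?_⟩
    linarith [(hstep k).2]
  refine ⟨u, ?_, ?_, ?_, ?_, ?_⟩
  · -- initial right limit
    have hc : ContinuousAt (z 0) τ := by
      have := ((hzspec 0).2 τ (by constructor <;> [linarith [hs0, hδ]; linarith [hs0, hδ]])).2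
      exact this.continuousAt
    have hz0τ : z 0 τ = u₀ := by rw [← hs0, (hzspec 0).1, hw0]
    have htend : Tendsto (z 0) (nhdsWithin τ (Set.Ioi τ)) (nhds u₀) := by
      rw [← hz0τ]
      exact hc.continuousWithinAt.tendsto
    have hmem : Set.Ioc τ (s 1) ∈ nhdsWithin τ (Set.Ioi τ) :=
      Ioc_mem_nhdsGT_of_mem ⟨le_rfl, by rw [← hs0]; exact (hstep 0).1⟩
    refine Filter.Tendsto.congr' ?_ htend
    filter_upwards [hmem] with x hx
    exact (hupiece 0 x (by rw [hs0]; exact hx.1) hx.2).symm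
  · -- membership in G
    intro t ht
    obtain ⟨k, h1, h2⟩ := hpieceex t ht
    rw [hupiece k t h1 h2]
    exact (hzmem k t h1 h2).1
  · -- derivative away from impulse times
    intro t ht hne
    obtain ⟨k, h1, h2⟩ := hpieceex t ht
    have h2' : t < s (k + 1) := lt_of_le_of_ne h2 (by rw [hssucc]; exact hne _)
    have heq : u =ᶠ[nhds t] z k := by
      filter_upwards [isOpen_Ioo.mem_nhds (⟨h1, h2'⟩ : t ∈ Set.Ioo (s k) (s (k + 1)))] with x hx
      exact hupiece k x hx.1 hx.2.le
    have hd := (hzmem k t h1 h2).2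
    have hut : u t = z k t := hupiece k t h1 h2
    rw [hut]
    exact hd.congr_of_eventuallyEq heq
  · -- left continuity at impulse times
    intro j hj
    have hj₀j : j₀ ≤ j := hj₀min j hj
    set k : ℕ := (j - j₀).toNat with hk_def
    have hkcast : (k : ℤ) = j - j₀ := Int.toNat_of_nonneg (by omega)
    have hjs : tj j = s (k + 1) := by rw [hssucc]; congr 1; omega
    rw [hjs]
    have hslt : s k < s (k + 1) := (hstep k).1
    have hc : ContinuousAt (z k) (s (k + 1)) :=
      ((hzmem k (s (k + 1)) hslt le_rfl).2).continuousAt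
    have hux : u (s (k + 1)) = z k (s (k + 1)) := hupiece k _ hslt le_rfl
    rw [ContinuousWithinAt]
    rw [hux]
    have hz : Tendsto (z k) (nhdsWithin (s (k + 1)) (Set.Iic (s (k + 1)))) (nhds (z k (s (k + 1)))) :=
      hc.continuousWithinAt.tendsto
    refine Filter.Tendsto.congr' ?_ hz
    have hmem : Set.Ioi (s k) ∈ nhdsWithin (s (k + 1)) (Set.Iic (s (k + 1))) :=
      mem_nhdsWithin_of_mem_nhds (Ioi_mem_nhds hslt)
    filter_upwards [hmem, self_mem_nhdsWithin] with x hx1 hx2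
    exact (hupiece k x hx1 hx2).symm
  · -- right limits at impulse times
    intro j hj
    have hj₀j : j₀ ≤ j := hj₀min j hj
    set k : ℕ := (j - j₀).toNat with hk_def
    have hkcast : (k : ℤ) = j - j₀ := Int.toNat_of_nonneg (by omega)
    have hjs : tj j = s (k + 1) := by rw [hssucc]; congr 1; omega
    have hslt : s k < s (k + 1) := (hstep k).1
    have hux : u (s (k + 1)) = z k (s (k + 1)) := hupiece k _ hslt le_rfl
    have hLj : (j₀ + (k : ℤ)) = j := by omega
    have hval : u (tj j) + L j (u (tj j)) = w (k + 1) := by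
      rw [hjs, hux, hwsucc, hLj]
    rw [hval, hjs]
    have hc : ContinuousAt (z (k + 1)) (s (k + 1)) := by
      have := ((hzspec (k + 1)).2 (s (k + 1)) ⟨by linarith [hδ], by linarith [hδ]⟩).2
      exact this.continuousAt
    have hzval : z (k + 1) (s (k + 1)) = w (k + 1) := (hzspec (k + 1)).1
    have hz : Tendsto (z (k + 1)) (nhdsWithin (s (k + 1)) (Set.Ioi (s (k + 1)))) (nhds (w (k + 1))) := by
      rw [← hzval]
      exact hc.continuousWithinAt.tendsto
    refine Filter.Tendsto.congr' ?_ hz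
    have hmem : Set.Ioc (s (k + 1)) (s (k + 2)) ∈ nhdsWithin (s (k + 1)) (Set.Ioi (s (k + 1))) :=
      Ioc_mem_nhdsGT_of_mem ⟨le_rfl, (hstep (k + 1)).1⟩
    filter_upwards [hmem] with x hx
    exact (hupiece (k + 1) x hx.1 hx.2).symm
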